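/- Identification of the marginal logit from two instrument values: let ν₀ ≠ ν₁ be real numbers and p₀, p₁ ∈ (0,1). If λ ∈ ℝ and ω ∈ ℝ satisfy p_z = Λ₂(λ, ν_z, ω) for z = 0,1, then e^{λ} = (e^{ν₀} - e^{ν₁}) / (e^{ν₀}(1/p₀ - 1) - e^{ν₁}(1/p₁ - 1)), so λ is uniquely determined by (p₀, p₁, ν₀, ν₁). -/

import Mathlib

open Real

noncomputable def AMH (u v w : ℝ) : ℝ :=
  (1 + Real.exp (-u) + Real.exp (-v) + (1 - w) * Real.exp (-u - v))⁻¹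

noncomputable def Lg (t : ℝ) : ℝ := (1 + Real.exp (-t))⁻¹

noncomputable def LgInv (p : ℝ) : ℝ := Real.log (p / (1 - p))

theorem marginal_logit_identification
    (ν₀ ν₁ : ℝ) (hν : ν₀ ≠ ν₁)
    (p₀ p₁ : ℝ) (hp₀ : p₀ ∈ Set.Ioo (0 : ℝ) 1) (hp₁ : p₁ ∈ Set.Ioo (0 : ℝ) 1)
    (lam ω : ℝ)
    (h0 : p₀ = AMH lam ν₀ ω) (h1 : p₁ = AMH lam ν₁ ω) :
    Real.exp lam =
      (Real.exp ν₀ - Real.exp ν₁) /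
        (Real.exp ν₀ * (1 / p₀ - 1) - Real.exp ν₁ * (1 / p₁ - 1)) := by
  obtain ⟨hp₀0, hp₀1⟩ := hp₀
  obtain ⟨hp₁0, hp₁1⟩ := hp₁
  have h0' : 1/p₀ = 1 + Real.exp (-lam) + Real.exp (-ν₀) + (1-ω) * Real.exp (-lam-ν₀) := by
    rw [h0, AMH, one_div, inv_inv]
  have h1' : 1/p₁ = 1 + Real.exp (-lam) + Real.exp (-ν₁) + (1-ω) * Real.exp (-lam-ν₁) := by
    rw [h1, AMH, one_div, inv_inv]
  have key : Real.exp ν₀ * (1 / p₀ - 1) - Real.exp ν₁ * (1 / p₁ - 1)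
      = Real.exp (-lam) * (Real.exp ν₀ - Real.exp ν₁) := by
    rw [h0', h1']
    have e0 : Real.exp (-lam-ν₀) * Real.exp ν₀ = Real.exp (-lam) := by
      rw [← Real.exp_add]; ring_nf
    have e1 : Real.exp (-lam-ν₁) * Real.exp ν₁ = Real.exp (-lam) := by
      rw [← Real.exp_add]; ring_nf
    have f0 : Real.exp (-ν₀) * Real.exp ν₀ = 1 := by
      rw [← Real.exp_add]; simp
    have f1 : Real.exp (-ν₁) * Real.exp ν₁ = 1 := by
      rw [← Real.exp_add]; simp
    linear_combination (1-ω)*e0 - (1-ω)*e1 + f0 - f1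
  have hA : Real.exp ν₀ - Real.exp ν₁ ≠ 0 := by
    intro h
    exact hν (Real.exp_injective (by linarith))
  rw [key, Real.exp_neg]
  rw [eq_div_iff (by
    intro h
    exact hA (by
      have he : Real.exp lam ≠ 0 := Real.exp_ne_zero lam
      field_simp at h
      rw [mul_zero] at h
      exact h))]
  field_simp
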